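/- Let Σ ∈ S⁺ⁿ be symmetric positive definite. The function A ↦ ½Tr(AΣ) + ½Tr(A^{-1}Σ') over S⁺ⁿ, where Σ' ∈ S⁺ⁿ, attains its minimum at the unique A ∈ S⁺ⁿ satisfying AΣA = Σ', given explicitly by A = Σ^{-1/2}(Σ^{1/2}Σ'Σ^{1/2})^{1/2}Σ^{-1/2}, and the minimal value equals Tr((Σ^{1/2}Σ'Σ^{1/2})^{1/2}). -/

import Mathlib

open Matrix

-- The positive semidefinite square root of a positive semidefinite matrix
-- (the definition of `Matrix.PosSemidef.sqrt` in Mathlib of December 2024, since removed).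
open scoped ComplexOrder in
noncomputable def Matrix.PosSemidef.sqrt {n 𝕜 : Type*} [Fintype n] [RCLike 𝕜] [DecidableEq n]
    {A : Matrix n n 𝕜} (hA : A.PosSemidef) : Matrix n n 𝕜 :=
  (hA.1.eigenvectorUnitary : Matrix n n 𝕜) *
    diagonal (((↑) : ℝ → 𝕜) ∘ (Real.sqrt ·) ∘ hA.1.eigenvalues) *
    (star hA.1.eigenvectorUnitary : Matrix n n 𝕜)

open scoped ComplexOrder in
lemma Matrix.PosSemidef.sqrt_mul_self {n 𝕜 : Type*} [Fintype n] [RCLike 𝕜] [DecidableEq n]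
    {A : Matrix n n 𝕜} (hA : A.PosSemidef) : hA.sqrt * hA.sqrt = A := by
  conv_rhs => rw [hA.1.spectral_theorem]
  rw [Unitary.conjStarAlgAut_apply]
  unfold Matrix.PosSemidef.sqrt
  set U := hA.1.eigenvectorUnitary
  have hU : (star U : Matrix n n 𝕜) * (U : Matrix n n 𝕜) = 1 := Unitary.star_mul_self_of_mem U.2
  set D := diagonal (((↑) : ℝ → 𝕜) ∘ (Real.sqrt ·) ∘ hA.1.eigenvalues)
  have e : (U : Matrix n n 𝕜) * D * (star U : Matrix n n 𝕜) * ((U : Matrix n n 𝕜) * D * (star U : Matrix n n 𝕜))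
      = (U : Matrix n n 𝕜) * (D * ((star U : Matrix n n 𝕜) * (U : Matrix n n 𝕜)) * D) * (star U : Matrix n n 𝕜) := by
    simp only [Matrix.mul_assoc]
  rw [e, hU, Matrix.mul_one, diagonal_mul_diagonal]
  congr 3
  funext i
  simp only [Function.comp_apply, ← RCLike.ofReal_mul, Real.mul_self_sqrt (hA.eigenvalues_nonneg i)]

open scoped ComplexOrder in
lemma Matrix.PosSemidef.posSemidef_sqrt {n 𝕜 : Type*} [Fintype n] [RCLike 𝕜] [DecidableEq n]
    {A : Matrix n n 𝕜} (hA : A.PosSemidef) : hA.sqrt.PosSemidef := by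
  unfold Matrix.PosSemidef.sqrt
  have hD : (diagonal (((↑) : ℝ → 𝕜) ∘ (Real.sqrt ·) ∘ hA.1.eigenvalues)).PosSemidef :=
    PosSemidef.diagonal fun i => by simp [Real.sqrt_nonneg]
  convert hD.mul_mul_conjTranspose_same (hA.1.eigenvectorUnitary : Matrix n n 𝕜) using 1
  simp [Matrix.star_eq_conjTranspose]

section aux

variable {n : ℕ}

lemma auxPosDefOfIsUnitDet {M : Matrix (Fin n) (Fin n) ℝ}
    (h1 : M.PosSemidef) (h2 : IsUnit M.det) : M.PosDef := by
  refine PosDef.of_dotProduct_mulVec_pos h1.1 fun x hx => ?_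
  have hMu : IsUnit M := (Matrix.isUnit_iff_isUnit_det M).2 h2
  have hinj := Matrix.mulVec_injective_iff_isUnit.2 hMu
  have hne : star x ⬝ᵥ M *ᵥ x ≠ 0 := fun h => by
    have hMx : M *ᵥ x = 0 := (h1.dotProduct_mulVec_zero_iff x).1 h
    exact hx (hinj (by rw [hMx]; simp))
  exact lt_of_le_of_ne ((posSemidef_iff_dotProduct_mulVec.mp h1).2 x) (Ne.symm hne)

lemma auxTraceEq (D : Matrix (Fin n) (Fin n) ℝ) :
    (Dᵀ * D).trace = ∑ i, ∑ j, (D j i) ^ 2 := by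
  simp [Matrix.trace, Matrix.mul_apply, Matrix.diag, sq]

lemma auxTraceNonneg (D : Matrix (Fin n) (Fin n) ℝ) : 0 ≤ (Dᵀ * D).trace := by
  rw [auxTraceEq]
  exact Finset.sum_nonneg fun i _ => Finset.sum_nonneg fun j _ => sq_nonneg _

lemma auxTraceZero {D : Matrix (Fin n) (Fin n) ℝ} (h : (Dᵀ * D).trace = 0) : D = 0 := by
  rw [auxTraceEq] at h
  ext j i
  have h1 := (Finset.sum_eq_zero_iff_of_nonneg
    (fun i _ => Finset.sum_nonneg fun j _ => sq_nonneg (D j i))).1 h i (Finset.mem_univ i)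
  have h2 := (Finset.sum_eq_zero_iff_of_nonneg
    (fun j _ => sq_nonneg (D j i))).1 h1 j (Finset.mem_univ j)
  simpa using pow_eq_zero_iff (n := 2) (by norm_num) |>.1 h2

/-- key identity -/
lemma auxKey {B T : Matrix (Fin n) (Fin n) ℝ} (hB : IsUnit B.det) :
    B.trace + (B⁻¹ * (T * T)).trace
      = 2 * T.trace + ((B - T) * B⁻¹ * (B - T)).trace := by
  have hB1 : B * B⁻¹ = 1 := Matrix.mul_nonsing_inv _ hB
  have hB2 : B⁻¹ * B = 1 := Matrix.nonsing_inv_mul _ hB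
  have e1 : (B - T) * B⁻¹ = 1 - T * B⁻¹ := by rw [Matrix.sub_mul, hB1]
  have e3 : T * B⁻¹ * B = T := by rw [Matrix.mul_assoc, hB2, Matrix.mul_one]
  have expand : (B - T) * B⁻¹ * (B - T) = B - T - (T - T * B⁻¹ * T) := by
    rw [e1, Matrix.sub_mul, Matrix.one_mul, Matrix.mul_sub, e3]
  have htr : ((B - T) * B⁻¹ * (B - T)).trace
      = B.trace - T.trace - (T.trace - (T * B⁻¹ * T).trace) := by
    rw [expand, Matrix.trace_sub, Matrix.trace_sub, Matrix.trace_sub]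
  have hcyc : (T * B⁻¹ * T).trace = (B⁻¹ * (T * T)).trace := by
    rw [Matrix.mul_assoc, Matrix.trace_mul_comm T (B⁻¹ * T), Matrix.mul_assoc]
  rw [htr, hcyc]; ring

end aux

theorem stmt13 {n : ℕ}
    (S S' : Matrix (Fin n) (Fin n) ℝ) (hS : S.PosDef) (hS' : S'.PosDef)
    (hmid : (hS.posSemidef.sqrt * S' * hS.posSemidef.sqrt).PosSemidef)
    (A0 : Matrix (Fin n) (Fin n) ℝ)
    (hA0 : A0 = hS.posSemidef.sqrt⁻¹ * hmid.sqrt * hS.posSemidef.sqrt⁻¹)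
    (G : Matrix (Fin n) (Fin n) ℝ → ℝ)
    (hG : ∀ A, G A = (1 / 2 : ℝ) * (A * S).trace + (1 / 2 : ℝ) * (A⁻¹ * S').trace) :
    A0.PosDef ∧ A0 * S * A0 = S' ∧
    (∀ A : Matrix (Fin n) (Fin n) ℝ, A.PosDef → G A0 ≤ G A) ∧
    (∀ A : Matrix (Fin n) (Fin n) ℝ, A.PosDef → (∀ B, B.PosDef → G A ≤ G B) → A = A0) ∧
    G A0 = hmid.sqrt.trace := by
  set R := hS.posSemidef.sqrt with hRdef
  set T := hmid.sqrt with hTdef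
  have hRR : R * R = S := hS.posSemidef.sqrt_mul_self
  have hRps : R.PosSemidef := hS.posSemidef.posSemidef_sqrt
  have hRdet : IsUnit R.det := by
    have : R.det * R.det = S.det := by rw [← Matrix.det_mul, hRR]
    have hS0 := hS.det_pos
    exact isUnit_iff_ne_zero.2 (fun h => by simp [h] at this; exact hS0.ne' this.symm)
  have hRpd : R.PosDef := auxPosDefOfIsUnitDet hRps hRdet
  have hTT : T * T = R * S' * R := hmid.sqrt_mul_self
  have hTps : T.PosSemidef := hmid.posSemidef_sqrt
  have hTdet : IsUnit T.det := by
    have h1 : T.det * T.det = R.det * S'.det * R.det := by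
      rw [← Matrix.det_mul, hTT, Matrix.det_mul, Matrix.det_mul]
    refine isUnit_iff_ne_zero.2 fun h => ?_
    rw [h, mul_zero] at h1
    have : R.det * S'.det * R.det ≠ 0 := by
      have := hS'.det_pos
      have hr : R.det ≠ 0 := hRdet.ne_zero
      positivity
    exact this h1.symm
  have hTpd : T.PosDef := auxPosDefOfIsUnitDet hTps hTdet
  have hR1 : R * R⁻¹ = 1 := Matrix.mul_nonsing_inv _ hRdet
  have hR2 : R⁻¹ * R = 1 := Matrix.nonsing_inv_mul _ hRdet
  have hRH : Rᴴ = R := hRps.1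
  have hRiH : (R⁻¹)ᴴ = R⁻¹ := by rw [Matrix.conjTranspose_nonsing_inv, hRH]
  -- A0 pos def
  have hA0ps : A0.PosSemidef := by
    rw [hA0]
    have := hTps.conjTranspose_mul_mul_same R⁻¹
    rwa [hRiH] at this
  have hRinvdet : IsUnit R⁻¹.det := R.isUnit_nonsing_inv_det hRdet
  have hA0det : IsUnit A0.det := by
    rw [hA0, Matrix.det_mul, Matrix.det_mul]
    exact (hRinvdet.mul hTdet).mul hRinvdet
  have hA0pd : A0.PosDef := auxPosDefOfIsUnitDet hA0ps hA0det
  have hA0R : A0 = R⁻¹ * T * R⁻¹ := hA0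
  -- A0 * S * A0 = S'
  have hASA : A0 * S * A0 = S' := by
    rw [hA0R, ← hRR]
    calc R⁻¹ * T * R⁻¹ * (R * R) * (R⁻¹ * T * R⁻¹)
        = R⁻¹ * (T * ((R⁻¹ * R) * ((R * R⁻¹) * T))) * R⁻¹ := by
          simp only [Matrix.mul_assoc]
      _ = R⁻¹ * (T * T) * R⁻¹ := by rw [hR1, hR2, Matrix.one_mul, Matrix.one_mul]
      _ = R⁻¹ * (R * S' * R) * R⁻¹ := by rw [hTT]
      _ = (R⁻¹ * R) * S' * (R * R⁻¹) := by simp only [Matrix.mul_assoc]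
      _ = S' := by rw [hR1, hR2, Matrix.one_mul, Matrix.mul_one]
  -- G A in terms of B = R * A * R
  have hS'eq : S' = R⁻¹ * (T * T) * R⁻¹ := by
    refine Eq.symm ?_
    rw [hTT]
    calc R⁻¹ * (R * S' * R) * R⁻¹ = (R⁻¹ * R) * S' * (R * R⁻¹) := by
          simp only [Matrix.mul_assoc]
      _ = S' := by rw [hR1, hR2, Matrix.one_mul, Matrix.mul_one]
  have hGform : ∀ A : Matrix (Fin n) (Fin n) ℝ, A.PosDef →
      G A = T.trace + (1 / 2 : ℝ) * ((R * A * R - T) * (R * A * R)⁻¹ * (R * A * R - T)).trace := by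
    intro A hA
    set B := R * A * R with hBdef
    have hAdet : IsUnit A.det := isUnit_iff_ne_zero.2 hA.det_pos.ne'
    have hBdet : IsUnit B.det := by
      rw [hBdef, Matrix.det_mul, Matrix.det_mul]
      exact (hRdet.mul (isUnit_iff_ne_zero.2 hA.det_pos.ne' : IsUnit A.det)).mul hRdet
    have hBinv : B⁻¹ = R⁻¹ * A⁻¹ * R⁻¹ := by
      rw [hBdef, Matrix.mul_inv_rev, Matrix.mul_inv_rev]
      rw [Matrix.mul_assoc]
    have h1 : (A * S).trace = B.trace := by
      rw [← hRR, hBdef, ← Matrix.mul_assoc]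
      rw [Matrix.trace_mul_comm (A * R) R, ← Matrix.mul_assoc]
    have h2 : (A⁻¹ * S').trace = (B⁻¹ * (T * T)).trace := by
      rw [hS'eq, hBinv]
      rw [Matrix.trace_mul_comm A⁻¹ (R⁻¹ * (T * T) * R⁻¹)]
      rw [Matrix.trace_mul_comm (R⁻¹ * A⁻¹ * R⁻¹) (T * T)]
      simp only [Matrix.mul_assoc]
      rw [Matrix.trace_mul_comm R⁻¹ (T * (T * (R⁻¹ * A⁻¹)))]
      simp only [Matrix.mul_assoc]
    have hkey := auxKey (T := T) hBdet
    rw [hG A, h1, h2]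
    linarith [hkey]
  -- value at A0 : R * A0 * R = T
  have hB0 : R * A0 * R = T := by
    rw [hA0R]
    calc R * (R⁻¹ * T * R⁻¹) * R = (R * R⁻¹) * T * (R⁻¹ * R) := by
          simp only [Matrix.mul_assoc]
      _ = T := by rw [hR1, hR2, Matrix.one_mul, Matrix.mul_one]
  have hGA0 : G A0 = T.trace := by
    rw [hGform A0 hA0pd, hB0]
    simp
  -- nonnegativity of error term
  have hErrNonneg : ∀ A : Matrix (Fin n) (Fin n) ℝ, A.PosDef →
      0 ≤ ((R * A * R - T) * (R * A * R)⁻¹ * (R * A * R - T)).trace ∧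
      (((R * A * R - T) * (R * A * R)⁻¹ * (R * A * R - T)).trace = 0 → R * A * R = T) := by
    intro A hA
    set B := R * A * R with hBdef
    have hBps : B.PosSemidef := by
      rw [hBdef]
      have := hA.posSemidef.conjTranspose_mul_mul_same R
      rwa [hRH] at this
    have hBdet : IsUnit B.det := by
      rw [hBdef, Matrix.det_mul, Matrix.det_mul]
      exact (hRdet.mul (isUnit_iff_ne_zero.2 hA.det_pos.ne' : IsUnit A.det)).mul hRdet
    have hBpd : B.PosDef := auxPosDefOfIsUnitDet hBps hBdet
    have hBipd : B⁻¹.PosDef := hBpd.inv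
    set Q := hBipd.posSemidef.sqrt with hQdef
    have hQQ : Q * Q = B⁻¹ := hBipd.posSemidef.sqrt_mul_self
    have hQH : Qᴴ = Q := hBipd.posSemidef.posSemidef_sqrt.1
    have hQT : Qᵀ = Q := by rw [← Matrix.conjTranspose_eq_transpose_of_trivial, hQH]
    have hQdet : IsUnit Q.det := by
      have h1 : Q.det * Q.det = B⁻¹.det := by rw [← Matrix.det_mul, hQQ]
      refine isUnit_iff_ne_zero.2 fun h => ?_
      rw [h, mul_zero] at h1
      have := hBipd.det_pos
      rw [← h1] at this
      exact lt_irrefl _ this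
    set C := B - T with hCdef
    have hCT : Cᵀ = C := by
      have hBH : Bᴴ = B := hBps.1
      have hTH : Tᴴ = T := hTps.1
      have : Cᴴ = C := by rw [hCdef, Matrix.conjTranspose_sub, hBH, hTH]
      rw [← Matrix.conjTranspose_eq_transpose_of_trivial, this]
    have hfact : C * B⁻¹ * C = (Q * C)ᵀ * (Q * C) := by
      rw [Matrix.transpose_mul, hQT, hCT, ← hQQ]
      simp only [Matrix.mul_assoc]
    constructor
    · rw [hfact]; exact auxTraceNonneg _
    · intro h0
      rw [hfact] at h0
      have hQC : Q * C = 0 := auxTraceZero h0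
      have : C = 0 := by
        have := congrArg (fun M => Q⁻¹ * M) hQC
        simpa [← Matrix.mul_assoc, Matrix.nonsing_inv_mul _ hQdet] using this
      rw [hCdef] at this
      exact sub_eq_zero.1 this
  refine ⟨hA0pd, hASA, ?_, ?_, by rw [hGA0]⟩
  · intro A hA
    rw [hGA0, hGform A hA]
    have := (hErrNonneg A hA).1
    linarith
  · intro A hA hmin
    have h1 : G A ≤ G A0 := hmin A0 hA0pd
    have h2 : G A0 ≤ G A := by
      rw [hGA0, hGform A hA]
      have := (hErrNonneg A hA).1
      linarith
    have heq : G A = T.trace := le_antisymm (le_trans h1 (le_of_eq hGA0)) (hGA0 ▸ h2)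
    rw [hGform A hA] at heq
    have hz : ((R * A * R - T) * (R * A * R)⁻¹ * (R * A * R - T)).trace = 0 := by linarith
    have hBT : R * A * R = T := (hErrNonneg A hA).2 hz
    have : A = R⁻¹ * (R * A * R) * R⁻¹ := by
      calc A = (R⁻¹ * R) * A * (R * R⁻¹) := by rw [hR1, hR2, Matrix.one_mul, Matrix.mul_one]
        _ = R⁻¹ * (R * A * R) * R⁻¹ := by simp only [Matrix.mul_assoc]
    rw [hA0R, ← hBT]
    exact this
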